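/- At any point p of a gradient Ricci soliton (Ric + Hess f = ρ g) where ∇f(p) ≠ 0, the squared norm of D satisfies |D_{ijk}|^2 = (2|∇f|^4/(n-2)^2) |h_{ab} - (H/(n-1)) g_{ab}|^2 + (1/(2(n-1)(n-2))) |∇^Σ R|^2, where h_{ab} and H are the second fundamental form and mean curvature of the level surface Σ = {f = f(p)} and ∇^Σ R is the tangential part of ∇R. -/

import Mathlib

open Finset

/-- Kronecker delta: components of the metric in an orthonormal frame. -/
def kd {n : ℕ} (i j : Fin n) : ℝ := if i = j then 1 else 0

/-- At any point of a gradient Ricci soliton `Ric + Hess f = ρ g` where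
`∇f ≠ 0`,
`|D|² = (2|∇f|⁴/(n-2)²)|h_{ab} - (H/(n-1))g_{ab}|² + (1/(2(n-1)(n-2)))|∇^Σ R|²`.
We work in an adapted orthonormal frame at the point, with `e_1` (index `0`) equal to
`∇f/|∇f|`, so `df = (s, 0, …, 0)` with `s = |∇f| > 0`; indices `≠ 0` are tangent to the
level surface `Σ = {f = f(p)}`, the second fundamental form is
`h_{ab} = ∇_a∇_b f/|∇f| = Hess a b / s`, `H = tr h`, and `∇^Σ R` is the tangential part
of `∇R`. -/
theorem normD_sq_eq_level_surface_geometry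
    (n : ℕ) (hn : 3 ≤ n) [NeZero n] (ρ R s H : ℝ)
    (Ric Hess : Fin n → Fin n → ℝ)
    (df dR : Fin n → ℝ)
    (hs : 0 < s)
    -- adapted frame: ∇f = s·e_1
    (hdf : ∀ i, df i = if i = 0 then s else 0)
    (hsol : ∀ i j, Ric i j + Hess i j = ρ * kd i j)
    (hRicsym : ∀ i j, Ric i j = Ric j i)
    (hRtr : R = ∑ i, Ric i i)
    (hHam : ∀ i, dR i = 2 * ∑ j, Ric i j * df j)
    -- mean curvature of the level surface
    (hH : H = ∑ a ∈ Finset.univ.filter (fun a : Fin n => a ≠ 0), Hess a a / s)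
    (D : Fin n → Fin n → Fin n → ℝ)
    (hD : ∀ i j k, D i j k =
      (1 / ((n : ℝ) - 2)) * (Ric j k * df i - Ric i k * df j)
      + (1 / (2 * ((n : ℝ) - 1) * ((n : ℝ) - 2))) * (kd j k * dR i - kd i k * dR j)
      - (R / (((n : ℝ) - 1) * ((n : ℝ) - 2))) * (kd j k * df i - kd i k * df j)) :
    ∑ i, ∑ j, ∑ k, (D i j k)^2
      = (2 * s^4 / ((n : ℝ) - 2)^2) *
          (∑ a ∈ Finset.univ.filter (fun a : Fin n => a ≠ 0),
            ∑ b ∈ Finset.univ.filter (fun b : Fin n => b ≠ 0),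
              (Hess a b / s - (H / ((n : ℝ) - 1)) * kd a b)^2)
        + (1 / (2 * ((n : ℝ) - 1) * ((n : ℝ) - 2))) *
            ∑ a ∈ Finset.univ.filter (fun a : Fin n => a ≠ 0), (dR a)^2 := by
  have hN3 : (3:ℝ) ≤ (n:ℝ) := by exact_mod_cast hn
  obtain ⟨e1, he1⟩ : ∃ x : ℝ, (n:ℝ) - 1 = x := ⟨_, rfl⟩
  obtain ⟨e2, he2⟩ : ∃ x : ℝ, (n:ℝ) - 2 = x := ⟨_, rfl⟩
  rw [he1, he2] at hD ⊢
  have he12 : e1 = e2 + 1 := by rw [← he1, ← he2]; ring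
  have h1 : e1 ≠ 0 := by rw [← he1]; intro h; linarith
  have h2 : e2 ≠ 0 := by rw [← he2]; intro h; linarith
  have hs0 : s ≠ 0 := ne_of_gt hs
  set T : Finset (Fin n) := Finset.univ.erase 0 with hT
  have hfilter : Finset.univ.filter (fun a : Fin n => a ≠ 0) = T := by
    simp [hT, Finset.filter_ne']
  have hsplit : ∀ f : Fin n → ℝ, ∑ i, f i = f 0 + ∑ i ∈ T, f i :=
    fun f => (Finset.add_sum_erase _ f (Finset.mem_univ 0)).symm
  have hmemT : ∀ a : Fin n, a ∈ T → a ≠ 0 := by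
    intro a ha; exact Finset.ne_of_mem_erase ha
  have hcard : (T.card : ℝ) = e1 := by
    rw [hT, Finset.card_erase_of_mem (Finset.mem_univ 0), Finset.card_univ, Fintype.card_fin,
      Nat.cast_sub (by omega : 1 ≤ n), ← he1]
    norm_num
  -- abbreviations
  set P : ℝ := ∑ a ∈ T, (Ric a 0)^2 with hP
  set Tr : ℝ := ∑ a ∈ T, Ric a a with hTr
  set Q : ℝ := ∑ j ∈ T, ∑ k ∈ T, (Ric j k - Tr / e1 * kd j k)^2 with hQ
  have hR : R = Ric 0 0 + Tr := by rw [hRtr, hsplit]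
  -- dR components
  have hdR : ∀ i, dR i = 2 * s * Ric i 0 := by
    intro i
    rw [hHam i, hsplit fun j => Ric i j * df j,
      Finset.sum_eq_zero (fun j hj => by rw [hdf]; simp [hmemT j hj]), hdf]
    simp; ring
  -- kd facts
  have kd00 : kd (0:Fin n) 0 = 1 := by simp [kd]
  have kdsymm : ∀ a b : Fin n, kd a b = kd b a := by
    intro a b; unfold kd; simp [eq_comm]
  have sum_kd : ∀ a ∈ T, ∀ f : Fin n → ℝ, ∑ k ∈ T, kd a k * f k = f a := by
    intro a ha f
    have h : ∀ k ∈ T, kd a k * f k = if a = k then f k else 0 := by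
      intro k _; unfold kd; split_ifs <;> ring
    rw [Finset.sum_congr rfl h, Finset.sum_ite_eq]
    simp [ha]
  -- component values of D
  have hD00 : ∀ k, D 0 0 k = 0 := by intro k; rw [hD]; ring
  have hskew : ∀ i j k, D j i k = - D i j k := by intro i j k; rw [hD, hD]; ring
  have hD0j0 : ∀ j ∈ T, D 0 j 0 = s * Ric j 0 / e1 := by
    intro j hj
    have hj0 : j ≠ 0 := hmemT j hj
    have k1 : kd j (0:Fin n) = 0 := by simp [kd, hj0]
    rw [hD, hdR, hdR, hdf, hdf, k1, kd00, if_pos rfl, if_neg hj0]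
    field_simp
    linear_combination (Ric j 0 * s) * he12
  have hD0jk : ∀ j ∈ T, ∀ k ∈ T, D 0 j k
      = s * (Ric j k - Tr / e1 * kd j k) / e2 := by
    intro j hj k hk
    have hj0 : j ≠ 0 := hmemT j hj
    have hk0 : (0:Fin n) ≠ k := fun h => (hmemT k hk) h.symm
    have k2 : kd (0:Fin n) k = 0 := by simp [kd, hk0]
    rw [hD, hdR, hdR, hdf, hdf, k2, if_pos rfl, if_neg hj0, hR]
    field_simp
    ring
  have hDab : ∀ a ∈ T, ∀ b ∈ T, ∀ k, D a b k
      = s * (kd b k * Ric a 0 - kd a k * Ric b 0) / (e1 * e2) := by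
    intro a ha b hb k
    rw [hD, hdR, hdR, hdf, hdf, if_neg (hmemT a ha), if_neg (hmemT b hb)]
    field_simp
    ring
  -- Hessian / mean curvature
  have hHess : ∀ a b, Hess a b = ρ * kd a b - Ric a b := by
    intro a b; have := hsol a b; linarith
  have hHval : H = (e1 * ρ - Tr) / s := by
    have e : ∀ a ∈ T, Hess a a / s = (ρ - Ric a a) / s := by
      intro a _
      rw [hHess]; simp [kd]
    rw [hH, hfilter, Finset.sum_congr rfl e, ← Finset.sum_div, Finset.sum_sub_distrib,
      Finset.sum_const, nsmul_eq_mul, hcard]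
  have hdRsum : ∑ a ∈ T, (dR a)^2 = 4 * s^2 * P := by
    rw [Finset.sum_congr rfl (fun a (_ : a ∈ T) =>
      (by rw [hdR]; ring : (dR a)^2 = 4 * s^2 * (Ric a 0)^2)), ← Finset.mul_sum]
  have hRHS1 : ∀ a ∈ T, ∀ b ∈ T, (Hess a b / s - (H / e1) * kd a b)^2
      = (Ric a b - Tr/e1 * kd a b)^2 / s^2 := by
    intro a _ b _
    rw [hHess, hHval]
    field_simp
    ring
  have sum0j : ∑ j ∈ T, ∑ k, (D 0 j k)^2
      = s^2/e1^2 * P + s^2/e2^2 * Q := by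
    have e : ∀ j ∈ T, ∑ k, (D 0 j k)^2
        = s^2/e1^2 * (Ric j 0)^2
          + s^2/e2^2 * (∑ k ∈ T, (Ric j k - Tr/e1*kd j k)^2) := by
      intro j hj
      rw [hsplit (fun k => (D 0 j k)^2), hD0j0 j hj,
        Finset.sum_congr rfl (fun k hk =>
          (by rw [hD0jk j hj k hk]; ring :
            (D 0 j k)^2 = s^2/e2^2 * (Ric j k - Tr/e1*kd j k)^2)),
        ← Finset.mul_sum]
      ring
    rw [Finset.sum_congr rfl e, Finset.sum_add_distrib, ← Finset.mul_sum, ← Finset.mul_sum]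
  have inner_ab : ∀ a ∈ T, ∀ b ∈ T, ∑ k, (D a b k)^2
      = s^2/(e1*e2)^2 *
          ((Ric a 0)^2 + (Ric b 0)^2 - 2 * (kd a b * (Ric a 0 * Ric b 0))) := by
    intro a ha b hb
    rw [hsplit (fun k => (D a b k)^2)]
    have h0 : D a b 0 = 0 := by
      rw [hDab a ha b hb 0]
      simp [kd, hmemT a ha, hmemT b hb]
    have tw : ∀ k ∈ T, (D a b k)^2
        = (s^2/(e1*e2)^2 * (kd b k * (Ric a 0)^2)
          + s^2/(e1*e2)^2 * (kd a k * (Ric b 0)^2))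
          - 2*s^2/(e1*e2)^2 * (kd a k * (kd b k * (Ric a 0 * Ric b 0))) := by
      intro k _
      rw [hDab a ha b hb k]
      unfold kd
      split_ifs <;> ring
    rw [h0, Finset.sum_congr rfl tw, Finset.sum_sub_distrib, Finset.sum_add_distrib,
      ← Finset.mul_sum, ← Finset.mul_sum, ← Finset.mul_sum,
      sum_kd b hb, sum_kd a ha, sum_kd a ha, kdsymm b a]
    ring
  have sumab : ∑ a ∈ T, ∑ b ∈ T, ∑ k, (D a b k)^2
      = s^2/(e1*e2)^2 * (2*e2*P) := by
    have ea : ∀ a ∈ T, ∑ b ∈ T, ∑ k, (D a b k)^2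
        = s^2/(e1*e2)^2 *
            (e1 * (Ric a 0)^2 + P - 2 * (Ric a 0 * Ric a 0)) := by
      intro a ha
      rw [Finset.sum_congr rfl (fun b hb => inner_ab a ha b hb), ← Finset.mul_sum,
        Finset.sum_sub_distrib, Finset.sum_add_distrib, Finset.sum_const, nsmul_eq_mul, hcard,
        ← Finset.mul_sum, sum_kd a ha, ← hP]
    rw [Finset.sum_congr rfl ea, ← Finset.mul_sum, Finset.sum_sub_distrib,
      Finset.sum_add_distrib, ← Finset.mul_sum, Finset.sum_const, nsmul_eq_mul, hcard,
      ← Finset.mul_sum]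
    have hPP : ∑ a ∈ T, Ric a 0 * Ric a 0 = P := by
      rw [hP]; exact Finset.sum_congr rfl (fun a _ => (sq (Ric a 0)).symm)
    rw [hPP, ← hP]
    linear_combination (2 * s^2 * P / (e1^2 * e2^2)) * he12
  -- assemble the left-hand side
  have A0 : ∑ j, ∑ k, (D 0 j k)^2 = ∑ j ∈ T, ∑ k, (D 0 j k)^2 := by
    rw [hsplit (fun j => ∑ k, (D 0 j k)^2)]
    simp [hD00]
  have Ai : ∀ i ∈ T, ∑ j, ∑ k, (D i j k)^2
      = ∑ k, (D 0 i k)^2 + ∑ j ∈ T, ∑ k, (D i j k)^2 := by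
    intro i hi
    rw [hsplit (fun j => ∑ k, (D i j k)^2)]
    congr 1
    exact Finset.sum_congr rfl (fun k _ => by rw [hskew]; ring)
  have LHSval : ∑ i, ∑ j, ∑ k, (D i j k)^2
      = 2 * (s^2/e1^2 * P + s^2/e2^2 * Q)
        + s^2/(e1*e2)^2 * (2*e2*P) := by
    rw [hsplit (fun i => ∑ j, ∑ k, (D i j k)^2), A0, Finset.sum_congr rfl Ai,
      Finset.sum_add_distrib, sum0j, sumab]
    ring
  -- assemble the right-hand side
  have RHS1 : ∑ a ∈ T, ∑ b ∈ T, (Hess a b / s - (H / e1) * kd a b)^2 = Q / s^2 := by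
    rw [Finset.sum_congr rfl (fun a ha => Finset.sum_congr rfl (fun b hb => hRHS1 a ha b hb)),
      Finset.sum_congr rfl (fun a (_ : a ∈ T) => (Finset.sum_div T _ (s^2)).symm),
      ← Finset.sum_div, ← hQ]
  rw [LHSval, hfilter, RHS1, hdRsum]
  field_simp
  linear_combination (-(4*P*e2)) * he12
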